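/- Let α > 0, β ∈ ℝ, K ∈ ℝ, f ∈ ℝ, and suppose 2v₀* + K > 0. Then the supremum over u ∈ ℝ of u·v₁* + v·v₀* − (α/2)(u² − β + v)² − (1/2)K u² + u·f, taken jointly over u, v ∈ ℝ, equals (1/2)(v₁* + f)²/(2v₀* + K) + (1/(2α))(v₀*)² + β v₀*. -/
import Mathlib


/-- Partial Legendre transform of the perturbed double-well
`G(u,v) = (α/2)(u² − β + v)² + (1/2)Ku² − uf`, under `2v₀ + K > 0`. -/
theorem stmt2 (α β K f v₀ v₁ : ℝ) (hα : 0 < α) (h : 0 < 2*v₀ + K) :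
    IsLUB {y : ℝ | ∃ u v : ℝ,
        y = u*v₁ + v*v₀ - (α/2)*(u^2 - β + v)^2 - (1/2)*K*u^2 + u*f}
      ((1/2)*(v₁ + f)^2/(2*v₀ + K) + (1/(2*α))*v₀^2 + β*v₀) := by
  have hα' := hα.ne'
  have h' := h.ne'
  constructor
  · rintro y ⟨u, v, rfl⟩
    rw [← sub_nonneg]
    have key : (1/2)*(v₁ + f)^2/(2*v₀ + K) + (1/(2*α))*v₀^2 + β*v₀
        - (u*v₁ + v*v₀ - (α/2)*(u^2 - β + v)^2 - (1/2)*K*u^2 + u*f)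
        = ((α*(u^2 - β + v) - v₀)^2 * (2*v₀+K) + α*((2*v₀+K)*u - (v₁+f))^2)
          / (2*α*(2*v₀+K)) := by
      field_simp
      ring
    rw [key]
    positivity
  · intro b hb
    have hmem : (1/2)*(v₁ + f)^2/(2*v₀ + K) + (1/(2*α))*v₀^2 + β*v₀
        = (let u := (v₁+f)/(2*v₀+K); let v := v₀/α - u^2 + β;
          u*v₁ + v*v₀ - (α/2)*(u^2 - β + v)^2 - (1/2)*K*u^2 + u*f) := by
      simp only
      field_simp
      ring
    rw [hmem]
    exact hb ⟨_, _, rfl⟩
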